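/- arXiv:2006.11206 — 8 statements merged into one kernel-verified Lean document; each statement's English description precedes it below -/
import Mathlib

section
/- Let A be an m×n complex matrix all of whose entries have absolute value at most 1, and suppose that ‖A*Av‖∞ ≥ k‖v‖∞ for all v ∈ ℂⁿ (A is k-Hadamard). Then for every v ∈ ℂⁿ, ‖v‖₁ · ‖Av‖₁ ≥ k · ‖v‖∞ · ‖Av‖∞. -/
open Finset Matrix

lemma mulVec_entry_bound {p q : ℕ} (B : Matrix (Fin p) (Fin q) ℂ)
    (hB : ∀ i j, ‖B i j‖ ≤ 1) (w : Fin q → ℂ) (j : Fin p) :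
    ‖B.mulVec w j‖ ≤ ∑ i, ‖w i‖ := by
  calc ‖B.mulVec w j‖ = ‖∑ i, B j i * w i‖ := by rfl
    _ ≤ ∑ i, ‖B j i * w i‖ := norm_sum_le _ _
    _ ≤ ∑ i, ‖w i‖ := by
        apply Finset.sum_le_sum
        intro i _
        rw [norm_mul]
        calc ‖B j i‖ * ‖w i‖ ≤ 1 * ‖w i‖ := by
              apply mul_le_mul_of_nonneg_right _ (norm_nonneg _)
              exact hB j i
          _ = ‖w i‖ := one_mul _

/-- If `A` is an `m × n` complex matrix with all entries of absolute value at most `1`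
and `‖AᴴAv‖∞ ≥ k‖v‖∞` for all `v` (i.e. `A` is `k`-Hadamard), then
`‖v‖₁‖Av‖₁ ≥ k‖v‖∞‖Av‖∞` for every `v`. -/
theorem hadamard_uncertainty (m n : ℕ) (k : ℝ) (hk : 0 < k)
    (A : Matrix (Fin m) (Fin n) ℂ)
    (hbd : ∀ i j, ‖A i j‖ ≤ 1)
    (hHad : ∀ v : Fin n → ℂ, k * (⨆ i, ‖v i‖) ≤ ⨆ i, ‖(Aᴴ * A).mulVec v i‖) :
    ∀ v : Fin n → ℂ,
      k * ((⨆ i, ‖v i‖) * ⨆ i, ‖A.mulVec v i‖) ≤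
        (∑ i, ‖v i‖) * ∑ i, ‖A.mulVec v i‖ := by
  intro v
  have hAH : ∀ i j, ‖Aᴴ i j‖ ≤ 1 := by
    intro i j
    simpa [Matrix.conjTranspose_apply] using hbd j i
  -- k * ‖v‖∞ ≤ ‖Av‖₁
  have h1 : k * (⨆ i, ‖v i‖) ≤ ∑ i, ‖A.mulVec v i‖ := by
    refine (hHad v).trans ?_
    apply Real.iSup_le _ (Finset.sum_nonneg fun i _ => norm_nonneg _)
    intro j
    rw [show (Aᴴ * A).mulVec v = Aᴴ.mulVec (A.mulVec v) from Matrix.mulVec_mulVec ..|>.symm]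
    exact mulVec_entry_bound Aᴴ hAH (A.mulVec v) j
  -- ‖Av‖∞ ≤ ‖v‖₁
  have h2 : (⨆ i, ‖A.mulVec v i‖) ≤ ∑ i, ‖v i‖ :=
    Real.iSup_le (fun j => mulVec_entry_bound A hbd v j)
      (Finset.sum_nonneg fun i _ => norm_nonneg _)
  have hs2 : 0 ≤ ⨆ i, ‖A.mulVec v i‖ := Real.iSup_nonneg fun i => norm_nonneg _
  calc k * ((⨆ i, ‖v i‖) * ⨆ i, ‖A.mulVec v i‖)
      = (k * (⨆ i, ‖v i‖)) * ⨆ i, ‖A.mulVec v i‖ := by ring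
    _ ≤ (∑ i, ‖A.mulVec v i‖) * ∑ i, ‖v i‖ :=
        mul_le_mul h1 h2 hs2 (Finset.sum_nonneg fun i _ => norm_nonneg _)
    _ = (∑ i, ‖v i‖) * ∑ i, ‖A.mulVec v i‖ := mul_comm _ _
end

section
/- Let A be an m×n complex k-Hadamard matrix (all entries of absolute value at most 1 and ‖A*Av‖∞ ≥ k‖v‖∞ for all v). Then for any nonzero v ∈ ℂⁿ, |supp(v)| · |supp(Av)| ≥ k, where supp denotes the set of nonzero coordinates. -/
open Finset Matrix

/-- Support-size uncertainty principle: if `A` is a `k`-Hadamard `m × n` complex matrix,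
then for any nonzero `v`, `|supp(v)| · |supp(Av)| ≥ k`. -/
theorem support_size_uncertainty (m n : ℕ) (k : ℝ) (hk : 0 < k)
    (A : Matrix (Fin m) (Fin n) ℂ)
    (hbd : ∀ i j, ‖A i j‖ ≤ 1)
    (hHad : ∀ v : Fin n → ℂ, k * (⨆ i, ‖v i‖) ≤ ⨆ i, ‖(Aᴴ * A).mulVec v i‖)
    (v : Fin n → ℂ) (hv : v ≠ 0) :
    k ≤ ((Function.support v).ncard : ℝ) *
        ((Function.support (A.mulVec v)).ncard : ℝ) := by
  classical
  obtain ⟨i0, hi0⟩ := Function.ne_iff.mp hv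
  haveI : Nonempty (Fin n) := ⟨i0⟩
  set w := A.mulVec v with hw
  set M : ℝ := ⨆ i, ‖v i‖ with hM
  have hMpos : 0 < M :=
    lt_of_lt_of_le (norm_pos_iff.mpr hi0) (le_ciSup (f := fun i => ‖v i‖) (Set.Finite.bddAbove (Set.finite_range _)) i0)
  set Sv : Finset (Fin n) := Finset.univ.filter (fun i => v i ≠ 0) with hSv
  set Sw : Finset (Fin m) := Finset.univ.filter (fun j => w j ≠ 0) with hSw
  have hsv : (Function.support v).ncard = Sv.card := by
    rw [show Function.support v = ↑Sv by
      ext x; simp [hSv, Function.mem_support], Set.ncard_coe_finset]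
  have hsw : (Function.support w).ncard = Sw.card := by
    rw [show Function.support w = ↑Sw by
      ext x; simp [hSw, Function.mem_support], Set.ncard_coe_finset]
  have hwb : ∀ j, ‖w j‖ ≤ Sv.card * M := by
    intro j
    calc ‖w j‖ = ‖∑ l, A j l * v l‖ := rfl
    _ ≤ ∑ l, ‖A j l * v l‖ := norm_sum_le _ _
    _ = ∑ l ∈ Sv, ‖A j l * v l‖ := by
        symm
        apply Finset.sum_subset (Finset.subset_univ _)
        intro x _ hx
        simp only [hSv, Finset.mem_filter, Finset.mem_univ, true_and, not_not] at hx
        simp [hx]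
    _ ≤ ∑ _l ∈ Sv, M := by
        apply Finset.sum_le_sum
        intro l _
        rw [norm_mul]
        calc ‖A j l‖ * ‖v l‖ ≤ 1 * ‖v l‖ := by
              gcongr
              simpa using hbd j l
        _ = ‖v l‖ := one_mul _
        _ ≤ M := le_ciSup (f := fun i => ‖v i‖) (Set.Finite.bddAbove (Set.finite_range _)) l
    _ = Sv.card * M := by simp [Finset.sum_const, nsmul_eq_mul]
  have hent : ∀ i, ‖(Aᴴ * A).mulVec v i‖ ≤ Sw.card * (Sv.card * M) := by
    intro i
    rw [← Matrix.mulVec_mulVec]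
    calc ‖Aᴴ.mulVec w i‖ = ‖∑ j, Aᴴ i j * w j‖ := rfl
    _ ≤ ∑ j, ‖Aᴴ i j * w j‖ := norm_sum_le _ _
    _ = ∑ j ∈ Sw, ‖Aᴴ i j * w j‖ := by
        symm
        apply Finset.sum_subset (Finset.subset_univ _)
        intro x _ hx
        simp only [hSw, Finset.mem_filter, Finset.mem_univ, true_and, not_not] at hx
        simp [hx]
    _ ≤ ∑ _j ∈ Sw, (Sv.card * M) := by
        apply Finset.sum_le_sum
        intro j _
        rw [norm_mul]
        calc ‖Aᴴ i j‖ * ‖w j‖ ≤ 1 * ‖w j‖ := by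
              gcongr
              simpa [Matrix.conjTranspose_apply] using hbd j i
        _ = ‖w j‖ := one_mul _
        _ ≤ Sv.card * M := hwb j
    _ = Sw.card * (Sv.card * M) := by simp [Finset.sum_const, nsmul_eq_mul]
  have hsup : (⨆ i, ‖(Aᴴ * A).mulVec v i‖) ≤ Sw.card * (Sv.card * M) := ciSup_le hent
  have hkey : k * M ≤ Sw.card * (Sv.card * M) := (hHad v).trans hsup
  rw [hsv, hsw]
  have := (mul_le_mul_iff_of_pos_right hMpos).mp (by linarith : k * M ≤ (↑Sv.card * ↑Sw.card) * M)
  linarith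
end

section
/- Let G be a finite abelian group, f : G → ℂ a nonzero function, and f̂ : Ĝ → ℂ its Fourier transform defined by f̂(χ) = Σ_{x∈G} f(x)·conj(χ(x)). Then |supp(f)| · |supp(f̂)| ≥ |G|. -/
open Finset

noncomputable section DonohoStarkAux

/-- The equivalence between additive characters of `Additive G` and monoid homs `G →* ℂ`. -/
private def dsCharEquiv (G : Type*) [CommGroup G] :
    AddChar (Additive G) ℂ ≃ (G →* ℂ) :=
  AddChar.toMonoidHomEquiv.trans
    (MulEquiv.multiplicativeAdditive G).monoidHomCongrLeftEquiv

private lemma dsCharEquiv_apply {G : Type*} [CommGroup G] (ψ : AddChar (Additive G) ℂ)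
    (g : G) : dsCharEquiv G ψ g = ψ (Additive.ofMul g) := rfl

private instance dsFintype (G : Type*) [CommGroup G] [Fintype G] : Fintype (G →* ℂ) :=
  Fintype.ofEquiv _ (dsCharEquiv G)

private lemma ds_sum_char {G : Type*} [CommGroup G] [Fintype G] [DecidableEq G] (g : G) :
    ∑ χ : G →* ℂ, χ g = if g = 1 then (Fintype.card G : ℂ) else 0 := by
  rw [← Equiv.sum_comp (dsCharEquiv G) (fun χ => χ g)]
  simp_rw [dsCharEquiv_apply]
  rw [AddChar.sum_apply_eq_ite (Additive.ofMul g)]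
  simp only [ofMul_eq_zero, Fintype.card_additive]

private lemma ds_norm_char {G : Type*} [CommGroup G] [Fintype G] (χ : G →* ℂ) (g : G) :
    ‖χ g‖ = 1 := by
  refine Complex.norm_eq_one_of_pow_eq_one (n := Fintype.card G) ?_ Fintype.card_ne_zero
  rw [← map_pow, pow_card_eq_one, map_one]

end DonohoStarkAux

/-- Donoho–Stark uncertainty principle: for a finite abelian group `G` and a nonzero
`f : G → ℂ` with Fourier transform `f̂(χ) = ∑ₓ f(x)·conj(χ(x))` (over characters
`χ : G →* ℂ`, which automatically take unit-circle values), one has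
`|supp(f)| · |supp(f̂)| ≥ |G|`. -/
theorem donoho_stark (G : Type*) [CommGroup G] [Fintype G]
    (f : G → ℂ) (hf : f ≠ 0) :
    Fintype.card G ≤
      (Function.support f).ncard *
        (Function.support
          (fun χ : G →* ℂ => ∑ x, f x * (starRingEnd ℂ) (χ x))).ncard := by
  classical
  set F : (G →* ℂ) → ℂ := fun χ => ∑ x, f x * (starRingEnd ℂ) (χ x) with hF
  -- finite supports as finsets
  have hAset : Function.support f = ↑(univ.filter fun x => f x ≠ 0) := by
    ext x; simp [Function.mem_support]
  have hBset : Function.support F = ↑(univ.filter fun χ => F χ ≠ 0) := by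
    ext χ; simp [Function.mem_support]
  set A : Finset G := univ.filter fun x => f x ≠ 0 with hA
  set B : Finset (G →* ℂ) := univ.filter fun χ => F χ ≠ 0 with hB
  -- maximum of ‖f‖
  obtain ⟨x₀, -, hx₀⟩ := Finset.exists_max_image (univ : Finset G) (fun x => ‖f x‖)
    ⟨1, mem_univ 1⟩
  set M : ℝ := ‖f x₀‖ with hM
  have hMpos : 0 < M := by
    obtain ⟨y, hy⟩ : ∃ y, f y ≠ 0 := by
      by_contra h; push_neg at h; exact hf (funext h)
    calc 0 < ‖f y‖ := norm_pos_iff.mpr hy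
      _ ≤ M := hx₀ y (mem_univ y)
  -- conjugate of character value is value at inverse
  have hconj : ∀ (χ : G →* ℂ) (g : G), (starRingEnd ℂ) (χ g) = χ g⁻¹ := by
    intro χ g
    rw [← Complex.inv_eq_conj (ds_norm_char χ g)]
    exact (eq_inv_of_mul_eq_one_left (by rw [← map_mul, inv_mul_cancel, map_one])).symm
  -- Fourier inversion at x₀
  have hinv : ∑ χ : G →* ℂ, F χ * χ x₀ = (Fintype.card G : ℂ) * f x₀ := by
    calc ∑ χ : G →* ℂ, F χ * χ x₀
        = ∑ χ : G →* ℂ, ∑ y : G, f y * (starRingEnd ℂ) (χ y) * χ x₀ :=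
          Finset.sum_congr rfl fun χ _ => Finset.sum_mul ..
      _ = ∑ y : G, ∑ χ : G →* ℂ, f y * (starRingEnd ℂ) (χ y) * χ x₀ := Finset.sum_comm
      _ = ∑ y : G, f y * ∑ χ : G →* ℂ, χ (y⁻¹ * x₀) := by
          refine Finset.sum_congr rfl fun y _ => ?_
          rw [Finset.mul_sum]
          exact Finset.sum_congr rfl fun χ _ => by rw [hconj, map_mul, mul_assoc]
      _ = ∑ y : G, if y = x₀ then f y * (Fintype.card G : ℂ) else 0 := by
          refine Finset.sum_congr rfl fun y _ => ?_
          rw [ds_sum_char]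
          simp only [inv_mul_eq_one, eq_comm (a := y), mul_ite, mul_zero]
      _ = (Fintype.card G : ℂ) * f x₀ := by
          rw [Finset.sum_ite_eq' univ x₀ (fun y => f y * (Fintype.card G : ℂ))]
          simp [mul_comm]
  -- bound ‖F χ‖ ≤ |A| * M
  have hFbound : ∀ χ : G →* ℂ, ‖F χ‖ ≤ (A.card : ℝ) * M := by
    intro χ
    calc ‖F χ‖ ≤ ∑ x, ‖f x * (starRingEnd ℂ) (χ x)‖ := norm_sum_le _ _
      _ = ∑ x, ‖f x‖ := by
          refine Finset.sum_congr rfl fun x _ => ?_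
          rw [norm_mul, RCLike.norm_conj, ds_norm_char, mul_one]
      _ = ∑ x ∈ A, ‖f x‖ := by
          rw [eq_comm, hA]
          refine Finset.sum_filter_of_ne fun x _ hx => ?_
          intro h; exact hx (by simp [h])
      _ ≤ A.card • M := Finset.sum_le_card_nsmul _ _ _ fun x _ => hx₀ x (mem_univ x)
      _ = (A.card : ℝ) * M := nsmul_eq_mul _ _
  -- main estimate
  have hmain : (Fintype.card G : ℝ) * M ≤ (B.card : ℝ) * ((A.card : ℝ) * M) := by
    calc (Fintype.card G : ℝ) * M = ‖(Fintype.card G : ℂ) * f x₀‖ := by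
          rw [norm_mul, Complex.norm_natCast]
      _ = ‖∑ χ : G →* ℂ, F χ * χ x₀‖ := by rw [hinv]
      _ ≤ ∑ χ : G →* ℂ, ‖F χ * χ x₀‖ := norm_sum_le _ _
      _ = ∑ χ : G →* ℂ, ‖F χ‖ := by
          refine Finset.sum_congr rfl fun χ _ => ?_
          rw [norm_mul, ds_norm_char, mul_one]
      _ = ∑ χ ∈ B, ‖F χ‖ := by
          rw [eq_comm, hB]
          refine Finset.sum_filter_of_ne fun χ _ hχ => ?_
          intro h; exact hχ (by simp [h])
      _ ≤ B.card • ((A.card : ℝ) * M) :=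
          Finset.sum_le_card_nsmul _ _ _ fun χ _ => hFbound χ
      _ = (B.card : ℝ) * ((A.card : ℝ) * M) := nsmul_eq_mul _ _
  have hcard : (Fintype.card G : ℝ) ≤ (A.card : ℝ) * (B.card : ℝ) := by
    rw [← mul_assoc, mul_comm (B.card : ℝ)] at hmain
    exact le_of_mul_le_mul_right hmain hMpos
  have : Fintype.card G ≤ A.card * B.card := by exact_mod_cast hcard
  rwa [hAset, hBset, Set.ncard_coe_finset, Set.ncard_coe_finset]
end

section
/- Let A be an m×n complex k-Hadamard matrix and v ∈ ℂⁿ nonzero. For ε, η ∈ [0,1), the (1,ε)-support size of v times the (1,η)-support size of Av is at least k(1−ε)(1−η). -/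
open Finset Matrix

/-- The `(1,δ)`-support size of `u`: the minimum cardinality of a set `T` of coordinates
such that `‖u[Tᶜ]‖₁ ≤ δ‖u‖₁`. -/
noncomputable def suppSize1 {n : ℕ} (δ : ℝ) (u : Fin n → ℂ) : ℕ :=
  sInf {s : ℕ | ∃ T : Finset (Fin n), T.card = s ∧
    ∑ i ∈ Tᶜ, ‖u i‖ ≤ δ * ∑ i, ‖u i‖}

lemma suppSize1_lower {n : ℕ} (δ : ℝ) (hδ : 0 ≤ δ) (u : Fin n → ℂ) :
    (1 - δ) * ∑ i, ‖u i‖ ≤ (suppSize1 δ u : ℝ) * ⨆ i, ‖u i‖ := by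
  have hne : {s : ℕ | ∃ T : Finset (Fin n), T.card = s ∧
      ∑ i ∈ Tᶜ, ‖u i‖ ≤ δ * ∑ i, ‖u i‖}.Nonempty := by
    refine ⟨(Finset.univ : Finset (Fin n)).card, Finset.univ, rfl, ?_⟩
    simp only [Finset.compl_univ, Finset.sum_empty]
    positivity
  obtain ⟨T, hTcard, hTsum⟩ := Nat.sInf_mem hne
  have hsplit : ∑ i ∈ T, ‖u i‖ + ∑ i ∈ Tᶜ, ‖u i‖ = ∑ i, ‖u i‖ :=
    Finset.sum_add_sum_compl T _
  have hlow : (1 - δ) * ∑ i, ‖u i‖ ≤ ∑ i ∈ T, ‖u i‖ := by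
    have := hTsum
    nlinarith [hsplit]
  have hup : ∑ i ∈ T, ‖u i‖ ≤ (T.card : ℝ) * ⨆ i, ‖u i‖ := by
    have hbd : ∀ i ∈ T, ‖u i‖ ≤ ⨆ i, ‖u i‖ := fun i _ =>
      le_ciSup (f := fun i => ‖u i‖) (Set.Finite.bddAbove (Set.finite_range _)) i
    calc ∑ i ∈ T, ‖u i‖ ≤ ∑ _i ∈ T, ⨆ i, ‖u i‖ := Finset.sum_le_sum hbd
      _ = (T.card : ℝ) * ⨆ i, ‖u i‖ := by
        rw [Finset.sum_const, nsmul_eq_mul]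
  have : (suppSize1 δ u : ℝ) = (T.card : ℝ) := by
    rw [hTcard]; rfl
  rw [this]
  exact hlow.trans hup

/-- `L¹`-approximate support uncertainty principle: if `A` is a `k`-Hadamard `m × n`
complex matrix, `v ≠ 0`, and `ε, η ∈ [0,1)`, then
`|supp¹_ε(v)| · |supp¹_η(Av)| ≥ k(1−ε)(1−η)`. -/
theorem approx_support_uncertainty (m n : ℕ) (k : ℝ) (hk : 0 < k)
    (A : Matrix (Fin m) (Fin n) ℂ)
    (hbd : ∀ i j, ‖A i j‖ ≤ 1)
    (hHad : ∀ v : Fin n → ℂ, k * (⨆ i, ‖v i‖) ≤ ⨆ i, ‖(Aᴴ * A).mulVec v i‖)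
    (v : Fin n → ℂ) (hv : v ≠ 0)
    (ε η : ℝ) (hε : ε ∈ Set.Ico (0 : ℝ) 1) (hη : η ∈ Set.Ico (0 : ℝ) 1) :
    k * (1 - ε) * (1 - η) ≤
      (suppSize1 ε v : ℝ) * (suppSize1 η (A.mulVec v) : ℝ) := by
  obtain ⟨hε0, hε1⟩ := hε
  obtain ⟨hη0, hη1⟩ := hη
  set w := A.mulVec v with hw
  set S1 := ∑ i, ‖v i‖ with hS1
  set M1 := (⨆ i, ‖v i‖ : ℝ) with hM1
  set S2 := ∑ i, ‖w i‖ with hS2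
  set M2 := (⨆ i, ‖w i‖ : ℝ) with hM2
  have hS1nn : 0 ≤ S1 := Finset.sum_nonneg fun i _ => norm_nonneg _
  have hS2nn : 0 ≤ S2 := Finset.sum_nonneg fun i _ => norm_nonneg _
  have hvx : ∃ i, v i ≠ 0 := by
    by_contra h; push_neg at h; exact hv (funext h)
  obtain ⟨i0, hi0⟩ := hvx
  have hM1pos : 0 < M1 :=
    lt_of_lt_of_le (norm_pos_iff.mpr hi0)
      (le_ciSup (f := fun i => ‖v i‖) (Set.Finite.bddAbove (Set.finite_range _)) i0)
  have hAnorm : ∀ i j, ‖A i j‖ ≤ 1 := fun i j => hbd i j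
  -- k * M1 ≤ S2
  have key1 : k * M1 ≤ S2 := by
    refine (hHad v).trans ?_
    have : Nonempty (Fin n) := ⟨i0⟩
    apply ciSup_le
    intro j
    have hrw : (Aᴴ * A).mulVec v j = Aᴴ.mulVec w j := by
      rw [hw, Matrix.mulVec_mulVec]
    rw [hrw]
    have : Aᴴ.mulVec w j = ∑ i, Aᴴ j i * w i := rfl
    rw [this]
    calc ‖∑ i, Aᴴ j i * w i‖ ≤ ∑ i, ‖Aᴴ j i * w i‖ := norm_sum_le _ _
      _ ≤ ∑ i, ‖w i‖ := by
          refine Finset.sum_le_sum fun i _ => ?_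
          rw [norm_mul]
          have h1 : ‖Aᴴ j i‖ ≤ 1 := by
            simp only [Matrix.conjTranspose_apply, norm_star]
            exact hAnorm i j
          nlinarith [norm_nonneg (w i), norm_nonneg (Aᴴ j i)]
  -- M2 ≤ S1
  have key2 : M2 ≤ S1 := by
    rcases isEmpty_or_nonempty (Fin m) with hm | hm
    · have : M2 = 0 := by
        rw [hM2, Real.iSup_of_isEmpty]
      rw [this]; exact hS1nn
    · apply ciSup_le
      intro i
      have : w i = ∑ j, A i j * v j := rfl
      rw [this]
      calc ‖∑ j, A i j * v j‖ ≤ ∑ j, ‖A i j * v j‖ := norm_sum_le _ _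
        _ ≤ ∑ j, ‖v j‖ := by
            refine Finset.sum_le_sum fun j _ => ?_
            rw [norm_mul]
            nlinarith [norm_nonneg (v j), norm_nonneg (A i j), hAnorm i j]
  have hS2pos : 0 < S2 := lt_of_lt_of_le (by positivity) key1
  have hM2pos : 0 < M2 := by
    by_contra h
    push_neg at h
    have hz : ∀ i, ‖w i‖ = 0 := by
      intro i
      have hle : ‖w i‖ ≤ M2 := le_ciSup (f := fun i => ‖w i‖) (Set.Finite.bddAbove (Set.finite_range _)) i
      have := norm_nonneg (w i)
      linarith
    have : S2 = 0 := Finset.sum_eq_zero fun i _ => hz i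
    linarith
  have h1 : (1 - ε) * S1 ≤ (suppSize1 ε v : ℝ) * M1 := suppSize1_lower ε hε0 v
  have h2 : (1 - η) * S2 ≤ (suppSize1 η w : ℝ) * M2 := suppSize1_lower η hη0 w
  have hc1 : (0 : ℝ) ≤ (suppSize1 ε v : ℝ) := Nat.cast_nonneg _
  have hc2 : (0 : ℝ) ≤ (suppSize1 η w : ℝ) := Nat.cast_nonneg _
  have hmain : k * (1 - ε) * (1 - η) * (M1 * M2) ≤
      ((suppSize1 ε v : ℝ) * (suppSize1 η w : ℝ)) * (M1 * M2) := by
    have hA : (1 - ε) * S1 * ((1 - η) * S2) ≤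
        ((suppSize1 ε v : ℝ) * M1) * ((suppSize1 η w : ℝ) * M2) :=
      mul_le_mul h1 h2 (mul_nonneg (by linarith) hS2nn) (mul_nonneg hc1 hM1pos.le)
    have hB : k * M1 * M2 ≤ S2 * S1 :=
      mul_le_mul key1 key2 hM2pos.le hS2nn
    nlinarith [mul_le_mul_of_nonneg_left hB (by nlinarith : (0:ℝ) ≤ (1 - ε) * (1 - η))]
  have hpos : 0 < M1 * M2 := mul_pos hM1pos hM2pos
  exact le_of_mul_le_mul_right hmain hpos
end

section
/- Let A be an m×n complex k-Hadamard matrix and v ∈ ℂⁿ nonzero. Then for any q ∈ [1,∞], ‖v‖₁ · ‖Av‖₁ ≥ k^{1−1/q} · ‖v‖_q · ‖Av‖_q. -/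
open Finset Matrix ENNReal

/-- The `L^p` norm on `ℂⁿ`, for `p ∈ [1,∞]` (an extended real). -/
noncomputable def lpNorm {n : ℕ} (p : ℝ≥0∞) (u : Fin n → ℂ) : ℝ :=
  if p = ∞ then ⨆ i, ‖u i‖ else (∑ i, ‖u i‖ ^ p.toReal) ^ (1 / p.toReal)

lemma lpNorm_nonneg {n : ℕ} (p : ℝ≥0∞) (u : Fin n → ℂ) : 0 ≤ lpNorm p u := by
  unfold lpNorm
  split
  · exact Real.iSup_nonneg fun i => norm_nonneg _
  · exact Real.rpow_nonneg (Finset.sum_nonneg fun i _ => Real.rpow_nonneg (norm_nonneg _) _) _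

lemma lpNorm_le_interp {n : ℕ} (q : ℝ≥0∞) (hq : 1 ≤ q) (u : Fin n → ℂ) :
    lpNorm q u ≤ (∑ i, ‖u i‖) ^ (1 / q.toReal) * (⨆ i, ‖u i‖) ^ (1 - 1 / q.toReal) := by
  have hS : (0:ℝ) ≤ ∑ i, ‖u i‖ := Finset.sum_nonneg fun i _ => norm_nonneg _
  have hI : (0:ℝ) ≤ ⨆ i, ‖u i‖ := Real.iSup_nonneg fun i => norm_nonneg _
  have hle : ∀ i, ‖u i‖ ≤ ⨆ i, ‖u i‖ := fun i =>
    le_ciSup (Set.Finite.bddAbove (Set.finite_range fun j => ‖u j‖)) i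
  by_cases hq' : q = ∞
  · simp [lpNorm, hq']
  · have hqr : 1 ≤ q.toReal := by
      have := ENNReal.toReal_mono hq' hq
      simpa using this
    have hqr0 : 0 < q.toReal := lt_of_lt_of_le one_pos hqr
    rw [lpNorm, if_neg hq']
    set qr := q.toReal with hqrdef
    have step1 : ∀ i ∈ Finset.univ, ‖u i‖ ^ qr ≤ ‖u i‖ * (⨆ i, ‖u i‖) ^ (qr - 1) := by
      intro i _
      rcases eq_or_lt_of_le (norm_nonneg (u i)) with h0 | h0
      · rw [← h0, Real.zero_rpow hqr0.ne', zero_mul]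
      · calc ‖u i‖ ^ qr = ‖u i‖ ^ (1 + (qr - 1)) := by ring_nf
          _ = ‖u i‖ ^ (1:ℝ) * ‖u i‖ ^ (qr - 1) := Real.rpow_add h0 1 (qr - 1)
          _ = ‖u i‖ * ‖u i‖ ^ (qr - 1) := by rw [Real.rpow_one]
          _ ≤ ‖u i‖ * (⨆ i, ‖u i‖) ^ (qr - 1) :=
            mul_le_mul_of_nonneg_left
              (Real.rpow_le_rpow (norm_nonneg _) (hle i) (by linarith)) (norm_nonneg _)
    have step2 : ∑ i, ‖u i‖ ^ qr ≤ (∑ i, ‖u i‖) * (⨆ i, ‖u i‖) ^ (qr - 1) := by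
      calc ∑ i, ‖u i‖ ^ qr ≤ ∑ i, ‖u i‖ * (⨆ i, ‖u i‖) ^ (qr - 1) := Finset.sum_le_sum step1
        _ = (∑ i, ‖u i‖) * (⨆ i, ‖u i‖) ^ (qr - 1) := by rw [← Finset.sum_mul]
    calc (∑ i, ‖u i‖ ^ qr) ^ (1 / qr)
        ≤ ((∑ i, ‖u i‖) * (⨆ i, ‖u i‖) ^ (qr - 1)) ^ (1 / qr) :=
          Real.rpow_le_rpow (Finset.sum_nonneg fun i _ => Real.rpow_nonneg (norm_nonneg _) _)
            step2 (by positivity)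
      _ = (∑ i, ‖u i‖) ^ (1 / qr) * (⨆ i, ‖u i‖) ^ (1 - 1 / qr) := by
          rw [Real.mul_rpow hS (Real.rpow_nonneg hI _), ← Real.rpow_mul hI]
          congr 1
          field_simp

/-- Norm uncertainty principle: if `A` is a `k`-Hadamard `m × n` complex matrix and
`v ≠ 0`, then for any `q ∈ [1,∞]`,
`‖v‖₁ · ‖Av‖₁ ≥ k^{1−1/q} · ‖v‖_q · ‖Av‖_q`. -/
theorem norm_uncertainty (m n : ℕ) (k : ℝ) (hk : 0 < k)
    (A : Matrix (Fin m) (Fin n) ℂ)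
    (hbd : ∀ i j, ‖A i j‖ ≤ 1)
    (hHad : ∀ v : Fin n → ℂ, k * (⨆ i, ‖v i‖) ≤ ⨆ i, ‖(Aᴴ * A).mulVec v i‖)
    (v : Fin n → ℂ) (hv : v ≠ 0) (q : ℝ≥0∞) (hq : 1 ≤ q) :
    k ^ (1 - 1 / q.toReal) * (lpNorm q v * lpNorm q (A.mulVec v)) ≤
      (∑ i, ‖v i‖) * ∑ i, ‖A.mulVec v i‖ := by
  set w := A.mulVec v with hw
  set Sv := ∑ i, ‖v i‖ with hSv
  set Sw := ∑ i, ‖w i‖ with hSw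
  set Iv := ⨆ i, ‖v i‖ with hIv
  set Iw := ⨆ i, ‖w i‖ with hIw
  have hSv0 : 0 ≤ Sv := Finset.sum_nonneg fun i _ => norm_nonneg _
  have hSw0 : 0 ≤ Sw := Finset.sum_nonneg fun i _ => norm_nonneg _
  have hIv0 : 0 ≤ Iv := Real.iSup_nonneg fun i => norm_nonneg _
  have hIw0 : 0 ≤ Iw := Real.iSup_nonneg fun i => norm_nonneg _
  -- (a) each entry of w bounded by Sv
  have ha : ∀ i, ‖w i‖ ≤ Sv := by
    intro i
    rw [hw]
    calc ‖A.mulVec v i‖ = ‖∑ j, A i j * v j‖ := by rw [Matrix.mulVec, dotProduct]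
      _ ≤ ∑ j, ‖A i j * v j‖ := norm_sum_le _ _
      _ ≤ ∑ j, ‖v j‖ := by
          refine Finset.sum_le_sum fun j _ => ?_
          rw [norm_mul]
          calc ‖A i j‖ * ‖v j‖ ≤ 1 * ‖v j‖ :=
                mul_le_mul_of_nonneg_right (hbd i j) (norm_nonneg _)
            _ = ‖v j‖ := one_mul _
  have haI : Iw ≤ Sv := Real.iSup_le ha hSv0
  -- (b) k * Iv ≤ Sw
  have hb : k * Iv ≤ Sw := by
    refine (hHad v).trans (Real.iSup_le (fun i => ?_) hSw0)
    rw [← Matrix.mulVec_mulVec]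
    calc ‖Aᴴ.mulVec w i‖ = ‖∑ j, Aᴴ i j * w j‖ := by rw [Matrix.mulVec, dotProduct]
      _ ≤ ∑ j, ‖Aᴴ i j * w j‖ := norm_sum_le _ _
      _ ≤ ∑ j, ‖w j‖ := by
          refine Finset.sum_le_sum fun j _ => ?_
          rw [norm_mul]
          have : ‖Aᴴ i j‖ ≤ 1 := by
            rw [Matrix.conjTranspose_apply]
            simpa using hbd j i
          calc ‖Aᴴ i j‖ * ‖w j‖ ≤ 1 * ‖w j‖ :=
                mul_le_mul_of_nonneg_right this (norm_nonneg _)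
            _ = ‖w j‖ := one_mul _
  -- positivity
  obtain ⟨i₀, hi₀⟩ : ∃ i, v i ≠ 0 := Function.ne_iff.mp hv
  have hIvpos : 0 < Iv := lt_of_lt_of_le (norm_pos_iff.mpr hi₀)
    (le_ciSup (Set.Finite.bddAbove (Set.finite_range fun j => ‖v j‖)) i₀)
  have hSvpos : 0 < Sv := by
    have : ‖v i₀‖ ≤ Sv := Finset.single_le_sum (fun j _ => norm_nonneg (v j))
      (Finset.mem_univ i₀)
    exact lt_of_lt_of_le (norm_pos_iff.mpr hi₀) this
  have hSwpos : 0 < Sw := lt_of_lt_of_le (by positivity) hb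
  -- exponents
  set r := 1 / q.toReal with hr
  set e := 1 - r with he
  have hr0 : 0 ≤ r := by positivity
  have he0 : 0 ≤ e := by
    rw [he]
    by_cases hq' : q = ∞
    · simp [hr, hq']
    · have hqr : 1 ≤ q.toReal := by
        have := ENNReal.toReal_mono hq' hq
        simpa using this
      have : r ≤ 1 := by
        rw [hr]
        rw [div_le_one (by linarith)]
        exact hqr
      linarith
  have h1 := lpNorm_le_interp q hq v
  have h2 := lpNorm_le_interp q hq w
  rw [← hSv, ← hIv, ← hr, ← he] at h1
  rw [← hSw, ← hIw, ← hr, ← he] at h2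
  have hke : 0 ≤ k ^ e := Real.rpow_nonneg hk.le _
  calc k ^ e * (lpNorm q v * lpNorm q w)
      ≤ k ^ e * ((Sv ^ r * Iv ^ e) * (Sw ^ r * Iw ^ e)) := by
        refine mul_le_mul_of_nonneg_left ?_ hke
        exact mul_le_mul h1 h2 (lpNorm_nonneg _ _) (by positivity)
    _ = (Sv ^ r * Sw ^ r) * ((k * Iv) ^ e * Iw ^ e) := by
        rw [Real.mul_rpow hk.le hIv0]; ring
    _ ≤ (Sv ^ r * Sw ^ r) * (Sw ^ e * Sv ^ e) := by
        refine mul_le_mul_of_nonneg_left ?_ (by positivity)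
        exact mul_le_mul (Real.rpow_le_rpow (by positivity) hb he0)
          (Real.rpow_le_rpow hIw0 haI he0) (by positivity) (by positivity)
    _ = (Sv ^ r * Sv ^ e) * (Sw ^ r * Sw ^ e) := by ring
    _ = Sv * Sw := by
        rw [← Real.rpow_add hSvpos, ← Real.rpow_add hSwpos]
        simp [he]
end

section
/- For real numbers a ≥ 1 and b ≥ 0, the function h(x) = (aˣ + b)^{1/x} is monotonically non-increasing for x ≥ 1. -/
lemma rpow_aux_bernoulli (A b t : ℝ) (hA : 1 ≤ A) (hb : 0 ≤ b) (ht : 1 ≤ t) :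
    A ^ t + b ≤ (A + b) ^ t := by
  have hApos : (0 : ℝ) < A := lt_of_lt_of_le one_pos hA
  have hbA : 0 ≤ b / A := div_nonneg hb hApos.le
  have hsplit : A + b = A * (1 + b / A) := by field_simp
  have h1 : (A + b) ^ t = A ^ t * (1 + b / A) ^ t := by
    rw [hsplit, Real.mul_rpow hApos.le (by linarith)]
  have hbern : 1 + t * (b / A) ≤ (1 + b / A) ^ t :=
    one_add_mul_self_le_rpow_one_add (by linarith) ht
  have hAt : 1 ≤ A ^ t := Real.one_le_rpow hA (by linarith)
  have h2 : A ^ t * (1 + t * (b / A)) ≤ (A + b) ^ t := by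
    rw [h1]
    exact mul_le_mul_of_nonneg_left hbern (by positivity)
  have h3 : A ^ t + b ≤ A ^ t * (1 + t * (b / A)) := by
    have : A ^ t * (1 + t * (b / A)) = A ^ t + t * b * (A ^ t / A) := by
      field_simp
    rw [this]
    have hAtA : 1 ≤ A ^ t / A := by
      rw [le_div_iff₀ hApos, one_mul]
      calc A = A ^ (1:ℝ) := (Real.rpow_one A).symm
        _ ≤ A ^ t := Real.rpow_le_rpow_of_exponent_le hA ht
    nlinarith [mul_nonneg hb (sub_nonneg.mpr hAtA),
      mul_nonneg (mul_nonneg (show (0:ℝ) ≤ t by linarith) hb) (sub_nonneg.mpr hAtA)]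
  linarith

/-- For `a ≥ 1` and `b ≥ 0`, the function `h(x) = (aˣ + b)^{1/x}` is monotonically
non-increasing on `[1, ∞)`. -/
theorem rpow_sum_antitone (a b : ℝ) (ha : 1 ≤ a) (hb : 0 ≤ b) :
    AntitoneOn (fun x : ℝ => (a ^ x + b) ^ (1 / x)) (Set.Ici (1 : ℝ)) := by
  intro x hx y hy hxy
  simp only [Set.mem_Ici] at hx hy
  have hx0 : (0:ℝ) < x := lt_of_lt_of_le one_pos hx
  have hy0 : (0:ℝ) < y := lt_of_lt_of_le one_pos hy
  have hax : 1 ≤ a ^ x := Real.one_le_rpow ha hx0.le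
  have hay : 0 ≤ a ^ y + b := by
    have : 1 ≤ a ^ y := Real.one_le_rpow ha hy0.le
    linarith
  have ht : 1 ≤ y / x := (one_le_div hx0).mpr hxy
  have key : a ^ y + b ≤ (a ^ x + b) ^ (y / x) := by
    have hay' : a ^ y = (a ^ x) ^ (y / x) := by
      rw [← Real.rpow_mul (by linarith : (0:ℝ) ≤ a)]
      congr 1
      field_simp
    rw [hay']
    exact rpow_aux_bernoulli _ _ _ hax hb ht
  calc (a ^ y + b) ^ (1 / y) ≤ ((a ^ x + b) ^ (y / x)) ^ (1 / y) :=
        Real.rpow_le_rpow hay key (by positivity)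
    _ = (a ^ x + b) ^ (1 / x) := by
        rw [← Real.rpow_mul (by linarith)]
        congr 1
        field_simp
end

section
/- Let f : ℝ → ℂ be nonzero with f ∈ L¹(ℝ) and f̂ ∈ L¹(ℝ). Then λ(supp f) · λ(supp f̂) ≥ 1, where λ is Lebesgue measure and supp g = {x : g(x) ≠ 0}. -/
open MeasureTheory FourierTransform Real
open scoped ContDiff SchwartzMap

/-- A smooth compactly supported function is a Schwartz map. -/
noncomputable def hcsSchwartz (g : ℝ → ℂ) (hg : ContDiff ℝ ∞ g)
    (h'g : HasCompactSupport g) : SchwartzMap ℝ ℂ where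
  toFun := g
  smooth' := hg
  decay' := by
    intro k n
    have hcont : Continuous fun x : ℝ => ‖x‖ ^ k * ‖iteratedFDeriv ℝ n g x‖ :=
      (continuous_norm.pow k).mul (hg.continuous_iteratedFDeriv (by exact_mod_cast le_top)).norm
    have hsupp : HasCompactSupport fun x : ℝ => ‖x‖ ^ k * ‖iteratedFDeriv ℝ n g x‖ :=
      HasCompactSupport.mul_left ((h'g.iteratedFDeriv n).norm)
    obtain ⟨C, hC⟩ := hsupp.exists_bound_of_continuous hcont
    refine ⟨C, fun x => ?_⟩
    have := hC x
    rwa [Real.norm_eq_abs, abs_of_nonneg (by positivity)] at this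

theorem flip_innerl : (innerₗ ℝ).flip = innerₗ ℝ := by
  ext
  simp [real_inner_comm]

theorem flip_neg_innerl : (-innerₗ ℝ).flip = -innerₗ ℝ := by
  ext
  simp [real_inner_comm]

theorem hL_inner : Continuous fun p : ℝ × ℝ => innerₗ ℝ p.1 p.2 := continuous_inner

theorem hL_neg_inner : Continuous fun p : ℝ × ℝ => (-innerₗ ℝ) p.1 p.2 := by
  have : Continuous fun p : ℝ × ℝ => (inner ℝ p.1 p.2 : ℝ) := continuous_inner
  exact this.neg

/-- Multiplication formula consequences: for Schwartz φ, ∫ φ f = ∫ φ 𝓕⁻(𝓕 f). -/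
theorem integral_schwartz_mul_eq (f : ℝ → ℂ) (hf : Integrable f) (hFf : Integrable (𝓕 f))
    (φ : 𝓢(ℝ, ℂ)) : ∫ x, φ x * f x = ∫ x, φ x * (𝓕⁻ (𝓕 f)) x := by
  set ψ : 𝓢(ℝ, ℂ) := (FourierTransform.fourierCLE ℂ 𝓢(ℝ, ℂ)).symm φ with hψ
  have hψcoe : ⇑ψ = 𝓕⁻ ⇑φ := by
    rw [hψ, FourierTransform.fourierCLE_symm_apply, SchwartzMap.fourierInv_coe]
  have hFψ : 𝓕 ⇑ψ = ⇑φ := by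
    rw [hψcoe]
    exact Continuous.fourier_fourierInv_eq φ.continuous φ.integrable
      (SchwartzMap.integrable ((FourierTransform.fourierCLE ℂ 𝓢(ℝ, ℂ)) φ))
  have step1 : ∫ x, φ x * (𝓕⁻ (𝓕 f)) x = ∫ y, (𝓕 f y) • ψ y := by
    calc ∫ x, φ x * (𝓕⁻ (𝓕 f)) x
        = ∫ x, (VectorFourier.fourierIntegral 𝐞 volume (-innerₗ ℝ) (𝓕 f) x) • φ x := by
          congr 1; ext x; rw [smul_eq_mul, mul_comm]; rfl
      _ = ∫ y, (𝓕 f y) • (VectorFourier.fourierIntegral 𝐞 volume (-innerₗ ℝ).flip (⇑φ) y) :=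
          VectorFourier.integral_fourierIntegral_smul_eq_flip Real.continuous_fourierChar
            hL_neg_inner hFf φ.integrable
      _ = ∫ y, (𝓕 f y) • ψ y := by
          rw [flip_neg_innerl]
          congr 1; ext y; rw [hψcoe]; rfl
  have step2 : ∫ y, (𝓕 f y) • ψ y = ∫ x, f x • φ x := by
    calc ∫ y, (𝓕 f y) • ψ y
        = ∫ y, (VectorFourier.fourierIntegral 𝐞 volume (innerₗ ℝ) f y) • ψ y := rfl
      _ = ∫ x, f x • (VectorFourier.fourierIntegral 𝐞 volume (innerₗ ℝ).flip (⇑ψ) x) :=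
          VectorFourier.integral_fourierIntegral_smul_eq_flip Real.continuous_fourierChar
            hL_inner hf ψ.integrable
      _ = ∫ x, f x • φ x := by
          rw [flip_innerl]
          congr 1; ext x
          congr 1
          show 𝓕 ⇑ψ x = φ x
          rw [hFψ]
  rw [step1, step2]
  congr 1; ext x; rw [smul_eq_mul, mul_comm]

/-- a.e. Fourier inversion. -/
theorem ae_eq_fourierInv (f : ℝ → ℂ) (hf : Integrable f) (hFf : Integrable (𝓕 f)) :
    f =ᵐ[volume] 𝓕⁻ (𝓕 f) := by
  have hgc : Continuous (𝓕⁻ (𝓕 f)) :=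
    VectorFourier.fourierIntegral_continuous Real.continuous_fourierChar hL_neg_inner hFf
  apply ae_eq_of_integral_contDiff_smul_eq hf.locallyIntegrable (hgc.locallyIntegrable)
  intro ψ hψ h'ψ
  have hφ : ContDiff ℝ ∞ fun x : ℝ => (ψ x : ℂ) :=
    Complex.ofRealCLM.contDiff.comp hψ
  have h'φ : HasCompactSupport fun x : ℝ => (ψ x : ℂ) :=
    h'ψ.comp_left Complex.ofReal_zero
  have := integral_schwartz_mul_eq f hf hFf (hcsSchwartz _ hφ h'φ)
  simp only [Complex.real_smul]; exact this

theorem fhat_eq_fourier (f : ℝ → ℂ) (ξ : ℝ) :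
    𝓕 f ξ = ∫ x : ℝ, Complex.exp (-2 * Real.pi * Complex.I * x * ξ) * f x := by
  rw [Real.fourier_eq']
  congr 1
  ext x
  rw [smul_eq_mul]
  congr 1
  simp only [RCLike.inner_apply, starRingEnd_apply, star_trivial]
  push_cast
  congr 1
  ring

/-- Matolcsi–Szűcs support uncertainty principle on `ℝ`: if `f ∈ L¹(ℝ)` is nonzero
(not a.e. zero) and its Fourier transform `f̂(ξ) = ∫ f(x) e^{−2πixξ} dx` is also in
`L¹(ℝ)`, then `λ(supp f) · λ(supp f̂) ≥ 1`. -/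
theorem support_uncertainty_real (f : ℝ → ℂ) (fhat : ℝ → ℂ)
    (hfhat : fhat = fun ξ : ℝ =>
      ∫ x : ℝ, Complex.exp (-2 * Real.pi * Complex.I * x * ξ) * f x)
    (hf : Integrable f) (hfhat1 : Integrable fhat)
    (hne : ¬ f =ᵐ[volume] 0) :
    1 ≤ volume (Function.support f) * volume (Function.support fhat) := by
  have hF : 𝓕 f = fhat := by
    ext ξ; rw [hfhat]; exact fhat_eq_fourier f ξ
  have hFf : Integrable (𝓕 f) := hF ▸ hfhat1
  set S := Function.support f with hS
  set T := Function.support fhat with hT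
  set A := ∫⁻ x, (‖f x‖₊ : ENNReal) with hA
  set B := ∫⁻ x, (‖fhat x‖₊ : ENNReal) with hB
  -- A is positive and finite
  have hA0 : A ≠ 0 := by
    intro h
    apply hne
    have := (lintegral_eq_zero_iff' hf.aestronglyMeasurable.enorm).mp h
    filter_upwards [this] with x hx
    simpa using hx
  have hAtop : A ≠ ⊤ := hf.2.ne
  -- pointwise bound on fhat
  have hfhatA : ∀ ξ, (‖fhat ξ‖₊ : ENNReal) ≤ A := by
    intro ξ
    have h1 : ‖fhat ξ‖ ≤ ∫ x, ‖f x‖ := by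
      rw [← hF]
      exact VectorFourier.norm_fourierIntegral_le_integral_norm 𝐞 volume (innerₗ ℝ) f ξ
    calc (‖fhat ξ‖₊ : ENNReal) = ENNReal.ofReal ‖fhat ξ‖ := (ofReal_norm _).symm
      _ ≤ ENNReal.ofReal (∫ x, ‖f x‖) := ENNReal.ofReal_le_ofReal h1
      _ = A := ofReal_integral_norm_eq_lintegral_enorm hf
  -- B ≤ A * volume T
  have hBA : B ≤ A * volume T := by
    calc B ≤ ∫⁻ x, T.indicator (fun _ => A) x := by
          apply lintegral_mono
          intro x
          by_cases hx : fhat x = 0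
          · simp [hx]
          · rw [Set.indicator_of_mem (Function.mem_support.mpr hx)]
            exact hfhatA x
      _ ≤ A * volume T := lintegral_indicator_const_le _ _
  -- pointwise bound on the inverse transform
  have hgB : ∀ x, (‖(𝓕⁻ fhat) x‖₊ : ENNReal) ≤ B := by
    intro x
    have h1 : ‖(𝓕⁻ (𝓕 f)) x‖ ≤ ∫ ξ, ‖𝓕 f ξ‖ :=
      VectorFourier.norm_fourierIntegral_le_integral_norm 𝐞 volume (-innerₗ ℝ) (𝓕 f) x
    rw [hF] at h1
    calc (‖(𝓕⁻ fhat) x‖₊ : ENNReal) = ENNReal.ofReal ‖(𝓕⁻ fhat) x‖ :=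
          (ofReal_norm _).symm
      _ ≤ ENNReal.ofReal (∫ ξ, ‖fhat ξ‖) := ENNReal.ofReal_le_ofReal h1
      _ = B := ofReal_integral_norm_eq_lintegral_enorm hfhat1
  -- A ≤ B * volume S
  have hAB : A ≤ B * volume S := by
    have hae := ae_eq_fourierInv f hf hFf
    rw [hF] at hae
    calc A ≤ ∫⁻ x, S.indicator (fun _ => B) x := by
          apply lintegral_mono_ae
          filter_upwards [hae] with x hx
          by_cases hx0 : f x = 0
          · simp [hx0]
          · rw [Set.indicator_of_mem (Function.mem_support.mpr hx0), hx]
            exact hgB x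
      _ ≤ B * volume S := lintegral_indicator_const_le _ _
  -- combine
  have hfinal : A * 1 ≤ A * (volume S * volume T) := by
    calc A * 1 = A := mul_one A
      _ ≤ B * volume S := hAB
      _ ≤ (A * volume T) * volume S := mul_le_mul_left hBA _
      _ = A * (volume S * volume T) := by ring
  exact (ENNReal.mul_le_mul_iff_right hA0 hAtop).mp hfinal
end

section
/- Let 1 < q ≤ ∞ and let g : ℝ → ℂ be a nonzero function in L¹(ℝ) ∩ L∞(ℝ) with finite variance V(g) = ∫ x²|g(x)|²dx. Then ‖g‖₁/‖g‖_q ≤ (2^{(5q−4)/(q−1)} · V(g)/‖g‖_q²)^{(q−1)/(3q−2)}. -/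
open MeasureTheory ENNReal Set

lemma ioi_piece (a R : ℝ) (ha : 0 < a) (hR : 0 < R) :
    ∫⁻ x in Ioi R, ENNReal.ofReal (a/(2*x^2)) = ENNReal.ofReal (a/(2*R)) := by
  have h0 : IntegrableOn (fun x : ℝ => x ^ (-2 : ℝ)) (Ioi R) :=
    integrableOn_Ioi_rpow_of_lt (by norm_num) hR
  have heq : ∀ x ∈ Ioi R, (a/2) * x ^ (-2 : ℝ) = a/(2*x^2) := by
    intro x hx
    have hx0 : 0 < x := hR.trans hx
    rw [show (-2 : ℝ) = -(2:ℕ) by norm_num, Real.rpow_neg hx0.le, Real.rpow_natCast]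
    field_simp
  have h1 : IntegrableOn (fun x : ℝ => a/(2*x^2)) (Ioi R) := by
    exact IntegrableOn.congr_fun (h0.const_mul (a/2)) (fun x hx => heq x hx) measurableSet_Ioi
  have hval : ∫ x in Ioi R, a/(2*x^2) = a/(2*R) := by
    rw [← setIntegral_congr_fun measurableSet_Ioi heq, MeasureTheory.integral_const_mul,
      integral_Ioi_rpow_of_lt (by norm_num) hR]
    rw [show (-2:ℝ) + 1 = -1 by norm_num, Real.rpow_neg_one]
    field_simp
  rw [← hval, ← ofReal_integral_eq_lintegral_ofReal h1
    (Filter.Eventually.of_forall fun x => by positivity)]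

lemma tail_inv_sq (a R : ℝ) (ha : 0 < a) (hR : 0 < R) :
    ∫⁻ x in (Icc (-R) R)ᶜ, ENNReal.ofReal (a/(2*x^2)) = ENNReal.ofReal (a/R) := by
  have hs : (Icc (-R) R)ᶜ = Iio (-R) ∪ Ioi R := by
    ext x; simp only [mem_compl_iff, mem_Icc, mem_union, mem_Iio, mem_Ioi, not_and_or, not_le]
  have hmeas : Measurable fun x : ℝ => ENNReal.ofReal (a/(2*x^2)) := by
    apply Measurable.ennreal_ofReal
    exact measurable_const.div ((measurable_id.pow_const 2).const_mul 2)
  have hneg : ∫⁻ x in Iio (-R), ENNReal.ofReal (a/(2*x^2)) =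
      ∫⁻ x in Ioi R, ENNReal.ofReal (a/(2*x^2)) := by
    have hpre : Neg.neg ⁻¹' (Iio (-R)) = Ioi R := by
      ext x; simp only [mem_preimage, mem_Iio, mem_Ioi]; constructor <;> intro h <;> linarith
    calc ∫⁻ x in Iio (-R), ENNReal.ofReal (a/(2*x^2))
        = ∫⁻ x in Iio (-R), ENNReal.ofReal (a/(2*x^2)) ∂(Measure.map Neg.neg volume) := by
          rw [Measure.map_neg_eq_self]
      _ = ∫⁻ x in Neg.neg ⁻¹' (Iio (-R)), ENNReal.ofReal (a/(2*(-x)^2)) := by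
          rw [setLIntegral_map measurableSet_Iio hmeas measurable_neg]
      _ = ∫⁻ x in Ioi R, ENNReal.ofReal (a/(2*x^2)) := by rw [hpre]; simp [neg_sq]
  rw [hs, lintegral_union measurableSet_Ioi
    ((Iio_disjoint_Ici (by linarith : -R ≤ R)).mono le_rfl Ioi_subset_Ici_self), hneg,
    ioi_piece a R ha hR, ← ENNReal.ofReal_add (by positivity) (by positivity)]
  congr 1
  field_simp
  ring

lemma holder_piece (q : ℝ≥0∞) (hq : 1 ≤ q) (hs1 : q⁻¹.toReal ≤ 1) (g : ℝ → ℂ)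
    (hmeas : AEStronglyMeasurable g volume) (R : ℝ) :
    ∫⁻ x in Icc (-R) R, (‖g x‖₊ : ℝ≥0∞) ≤
      eLpNorm g q volume * (ENNReal.ofReal (2*R)) ^ (1 - q⁻¹.toReal) := by
  have h1 := eLpNorm_le_eLpNorm_mul_rpow_measure_univ (p := 1) (q := q) hq
    (hmeas.restrict (s := Icc (-R) R))
  rw [eLpNorm_one_eq_lintegral_enorm] at h1
  have hexp : 1/(1:ℝ≥0∞).toReal - 1/q.toReal = 1 - q⁻¹.toReal := by
    simp [ENNReal.toReal_inv, one_div]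
  rw [hexp, Measure.restrict_apply_univ] at h1
  refine h1.trans ?_
  have hIcc : volume (Icc (-R) R) ≤ ENNReal.ofReal (2*R) := by
    rw [Real.volume_Icc]
    exact le_of_eq (by congr 1; ring)
  gcongr
  · exact Measure.restrict_le_self

/-- Variance bound on the `L¹/L^q` norm ratio: for `1 < q ≤ ∞` and a nonzero
`g ∈ L¹(ℝ) ∩ L∞(ℝ)` with finite variance `V(g) = ∫ x²|g(x)|² dx`,
`‖g‖₁/‖g‖_q ≤ (2^{(5q−4)/(q−1)} · V(g)/‖g‖_q²)^{(q−1)/(3q−2)}`.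
(Writing `s = 1/q ∈ [0,1)`, the exponents are `(5−4s)/(1−s)` and `(1−s)/(3−2s)`,
which for `q = ∞` give `5` and `1/3` as required.) -/
theorem variance_norm_ratio_bound (q : ℝ≥0∞) (hq : 1 < q)
    (g : ℝ → ℂ) (hg : g ≠ 0) (hg1 : Integrable g) (hg2 : MemLp g ⊤ volume)
    (hV : (∫⁻ x : ℝ, ENNReal.ofReal (x ^ 2 * ‖g x‖ ^ 2)) ≠ ⊤) :
    eLpNorm g 1 volume / eLpNorm g q volume ≤
      ((2 : ℝ≥0∞) ^ ((5 - 4 * q⁻¹.toReal) / (1 - q⁻¹.toReal)) *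
          (∫⁻ x : ℝ, ENNReal.ofReal (x ^ 2 * ‖g x‖ ^ 2)) /
          eLpNorm g q volume ^ 2) ^
        ((1 - q⁻¹.toReal) / (3 - 2 * q⁻¹.toReal)) := by
  set s := q⁻¹.toReal with hsdef
  set V := ∫⁻ x : ℝ, ENNReal.ofReal (x ^ 2 * ‖g x‖ ^ 2) with hVdef
  have hq0' : q ≠ 0 := (zero_lt_one.trans hq).ne'
  have hs0 : 0 ≤ s := ENNReal.toReal_nonneg
  have hs1 : s < 1 := by
    have hqinv : q⁻¹ < 1 := ENNReal.inv_lt_one.mpr hq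
    have := (ENNReal.toReal_lt_toReal (hqinv.trans one_lt_top).ne ENNReal.one_ne_top).mpr hqinv
    simpa [hsdef, ENNReal.toReal_inv] using this
  by_cases hq0 : eLpNorm g q volume = 0
  · have hg0 : g =ᵐ[volume] 0 := (eLpNorm_eq_zero_iff hg1.aestronglyMeasurable hq0').mp hq0
    have h1 : eLpNorm g 1 volume = 0 := by rw [eLpNorm_congr_ae hg0, eLpNorm_zero]
    simp [h1]
  by_cases hqt : eLpNorm g q volume = ⊤
  · simp [hqt]
  -- main case
  set e1 := (5 - 4*s)/(1-s) with he1def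
  set e2 := (1-s)/(3-2*s) with he2def
  have h3s : (0:ℝ) < 3 - 2*s := by linarith
  have h1s : (0:ℝ) < 1 - s := by linarith
  have he1 : 0 ≤ e1 := div_nonneg (by linarith) h1s.le
  have he2 : 0 ≤ e2 := div_nonneg h1s.le h3s.le
  have hN1t : eLpNorm g 1 volume ≠ ⊤ := (memLp_one_iff_integrable.mpr hg1).2.ne
  set Nq := (eLpNorm g q volume).toReal with hNqdef
  have hNq : 0 < Nq := ENNReal.toReal_pos hq0 hqt
  have hV0 : V ≠ 0 := by
    intro h0
    have hmeas : AEMeasurable (fun x : ℝ => ENNReal.ofReal (x ^ 2 * ‖g x‖ ^ 2)) volume :=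
      (((measurable_id.pow_const 2).aemeasurable).mul
        ((hg1.aestronglyMeasurable.norm.aemeasurable).pow_const 2)).ennreal_ofReal
    have h2 := (lintegral_eq_zero_iff' hmeas).mp (hVdef ▸ h0)
    have hne : ∀ᵐ x : ℝ ∂volume, x ≠ 0 := by
      have : volume ({0} : Set ℝ) = 0 := measure_singleton 0
      rw [ae_iff]
      simpa [not_not] using this
    have hg0 : g =ᵐ[volume] 0 := by
      filter_upwards [h2, hne] with x hx hxne
      simp only [Pi.zero_apply, ENNReal.ofReal_eq_zero] at hx
      have hx2 : 0 < x^2 := by positivity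
      have h2' : ‖g x‖^2 = 0 := le_antisymm (by nlinarith [sq_nonneg ‖g x‖]) (sq_nonneg _)
      have hgx : ‖g x‖ = 0 := by
        have := sq_eq_zero_iff.mp h2'
        simpa using this
      simpa using hgx
    exact hq0 (by rw [eLpNorm_congr_ae hg0, eLpNorm_zero])
  have hVr : 0 < V.toReal := ENNReal.toReal_pos hV0 hV
  set r := ((2*s-1)*Real.log 2 + Real.log V.toReal - 2*Real.log Nq)/(3-2*s) with hrdef
  set R := Real.exp r with hRdef
  have hR : 0 < R := Real.exp_pos r
  set a := Real.exp ((r + Real.log V.toReal - Real.log 2)/2) with hadef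
  have ha : 0 < a := Real.exp_pos _
  set T := (Real.log V.toReal - Real.log 2 - r)/2 with hTdef
  -- tail pointwise bound
  have hSm : MeasurableSet ((Icc (-R) R)ᶜ : Set ℝ) := measurableSet_Icc.compl
  have hptwise : ∀ᵐ x ∂(volume.restrict (Icc (-R) R)ᶜ),
      (‖g x‖₊ : ℝ≥0∞) ≤ ENNReal.ofReal (a/(2*x^2)) +
        ENNReal.ofReal (1/(2*a)) * ENNReal.ofReal (x^2*‖g x‖^2) := by
    rw [ae_restrict_iff' hSm]
    refine Filter.Eventually.of_forall fun x hx => ?_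
    have hx0 : x ≠ 0 := by
      rintro rfl
      exact hx (Set.mem_Icc.mpr ⟨by linarith, by linarith⟩)
    have hx2 : 0 < x^2 := by positivity
    rw [← ENNReal.ofReal_mul (by positivity), ← enorm_eq_nnnorm, ← ofReal_norm_eq_enorm,
      ← ENNReal.ofReal_add (by positivity) (by positivity)]
    apply ENNReal.ofReal_le_ofReal
    have hiden : a/(2*x^2) + 1/(2*a) * (x^2*‖g x‖^2) - ‖g x‖
        = (a - x^2*‖g x‖)^2 / (2*a*x^2) := by
      field_simp
      ring
    nlinarith [div_nonneg (sq_nonneg (a - x^2*‖g x‖)) (by positivity : (0:ℝ) ≤ 2*a*x^2)]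
  have hmeas1 : Measurable fun x : ℝ => ENNReal.ofReal (a/(2*x^2)) := by
    apply Measurable.ennreal_ofReal
    exact measurable_const.div ((measurable_id.pow_const 2).const_mul 2)
  have hB : ∫⁻ x in (Icc (-R) R)ᶜ, (‖g x‖₊ : ℝ≥0∞) ≤
      ENNReal.ofReal (a/R) + ENNReal.ofReal (1/(2*a)) * V := by
    calc ∫⁻ x in (Icc (-R) R)ᶜ, (‖g x‖₊ : ℝ≥0∞)
        ≤ ∫⁻ x in (Icc (-R) R)ᶜ, (ENNReal.ofReal (a/(2*x^2)) +
            ENNReal.ofReal (1/(2*a)) * ENNReal.ofReal (x^2*‖g x‖^2)) :=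
          lintegral_mono_ae hptwise
      _ = (∫⁻ x in (Icc (-R) R)ᶜ, ENNReal.ofReal (a/(2*x^2))) +
            ∫⁻ x in (Icc (-R) R)ᶜ, ENNReal.ofReal (1/(2*a)) * ENNReal.ofReal (x^2*‖g x‖^2) :=
          lintegral_add_left hmeas1 _
      _ ≤ ENNReal.ofReal (a/R) + ENNReal.ofReal (1/(2*a)) * V := by
          rw [tail_inv_sq a R ha hR, lintegral_const_mul' _ _ ENNReal.ofReal_ne_top]
          gcongr
          exact setLIntegral_le_lintegral _ _
  have hmain : eLpNorm g 1 volume ≤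
      ENNReal.ofReal (Nq * (2*R)^(1-s)) +
        (ENNReal.ofReal (a/R) + ENNReal.ofReal (1/(2*a)) * V) := by
    rw [eLpNorm_one_eq_lintegral_enorm,
      ← lintegral_add_compl (fun x => ‖g x‖ₑ) (measurableSet_Icc (a := -R) (b := R))]
    refine add_le_add ?_ hB
    refine (holder_piece q hq.le hs1.le g hg1.aestronglyMeasurable R).trans ?_
    rw [ENNReal.ofReal_rpow_of_pos (by positivity), ← ENNReal.ofReal_toReal hqt, ← hNqdef,
      ← ENNReal.ofReal_mul hNq.le]
  have hfin3 : ENNReal.ofReal (1/(2*a)) * V ≠ ⊤ := ENNReal.mul_ne_top ENNReal.ofReal_ne_top hV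
  have hfin2 : ENNReal.ofReal (a/R) + ENNReal.ofReal (1/(2*a)) * V ≠ ⊤ :=
    ENNReal.add_ne_top.mpr ⟨ENNReal.ofReal_ne_top, hfin3⟩
  have hfinB : ENNReal.ofReal (Nq * (2*R)^(1-s)) +
      (ENNReal.ofReal (a/R) + ENNReal.ofReal (1/(2*a)) * V) ≠ ⊤ :=
    ENNReal.add_ne_top.mpr ⟨ENNReal.ofReal_ne_top, hfin2⟩
  have hreal : (eLpNorm g 1 volume).toReal ≤ Nq * (2*R)^(1-s) + (a/R + V.toReal/(2*a)) := by
    have h1 := ENNReal.toReal_mono hfinB hmain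
    rw [ENNReal.toReal_add ENNReal.ofReal_ne_top hfin2,
      ENNReal.toReal_add ENNReal.ofReal_ne_top hfin3,
      ENNReal.toReal_ofReal (by positivity), ENNReal.toReal_ofReal (by positivity),
      ENNReal.toReal_mul, ENNReal.toReal_ofReal (by positivity)] at h1
    have : 1/(2*a) * V.toReal = V.toReal/(2*a) := by ring
    linarith
  -- exponential identities
  have hT1 : Nq * (2*R)^(1-s) = Real.exp (T + Real.log 2) := by
    rw [Real.rpow_def_of_pos (by positivity), Real.log_mul two_ne_zero hR.ne',
      show Real.log R = r from by rw [hRdef, Real.log_exp]]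
    nth_rewrite 1 [show Nq = Real.exp (Real.log Nq) from (Real.exp_log hNq).symm]
    rw [← Real.exp_add]
    congr 1
    rw [hTdef, hrdef]
    field_simp
    ring
  have hT2 : a / R = Real.exp T := by
    rw [hadef, hRdef, ← Real.exp_sub]
    congr 1
    rw [hTdef]; ring
  have hT3 : V.toReal/(2*a) = Real.exp T := by
    have h2a : (2:ℝ)*a = Real.exp (Real.log 2 + (r + Real.log V.toReal - Real.log 2)/2) := by
      rw [Real.exp_add, Real.exp_log two_pos, hadef]
    rw [h2a]
    nth_rewrite 1 [show V.toReal = Real.exp (Real.log V.toReal) from (Real.exp_log hVr).symm]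
    rw [← Real.exp_sub]
    congr 1
    rw [hTdef]; ring
  have hbasepos : (0:ℝ) < (2:ℝ)^e1 * V.toReal / Nq^2 := by positivity
  have hlogbase : Real.log ((2:ℝ)^e1 * V.toReal / Nq^2) =
      e1*Real.log 2 + Real.log V.toReal - 2*Real.log Nq := by
    rw [Real.log_div (by positivity) (by positivity), Real.log_mul (by positivity) hVr.ne',
      Real.log_rpow two_pos, Real.log_pow]
    push_cast; ring
  have hT4 : ((2:ℝ)^e1 * V.toReal / Nq^2)^e2 * Nq = Real.exp (T + 2*Real.log 2) := by
    rw [Real.rpow_def_of_pos hbasepos, hlogbase]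
    nth_rewrite 2 [show Nq = Real.exp (Real.log Nq) from (Real.exp_log hNq).symm]
    rw [← Real.exp_add]
    congr 1
    rw [hTdef, hrdef, he1def, he2def]
    field_simp
    have h3 : (3 - s*2) ≠ 0 := by linarith
    field_simp
    ring
  have hkey : Nq * (2*R)^(1-s) + (a/R + V.toReal/(2*a)) =
      ((2:ℝ)^e1 * V.toReal / Nq^2)^e2 * Nq := by
    rw [hT1, hT2, hT3, hT4, Real.exp_add,
      show (2:ℝ)*Real.log 2 = Real.log 2 + Real.log 2 by ring, Real.exp_add, Real.exp_add,
      Real.exp_log two_pos]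
    ring
  -- transfer to ℝ≥0∞
  have h2e1 : ((2:ℝ≥0∞)^e1) ≠ ⊤ := ENNReal.rpow_ne_top_of_nonneg he1 (by norm_num)
  have hRHSfin : ((2:ℝ≥0∞)^e1 * V / eLpNorm g q volume ^ 2)^e2 ≠ ⊤ :=
    ENNReal.rpow_ne_top_of_nonneg he2
      (ENNReal.div_lt_top (ENNReal.mul_ne_top h2e1 hV) (pow_ne_zero 2 hq0)).ne
  have hLHSfin : eLpNorm g 1 volume / eLpNorm g q volume ≠ ⊤ :=
    (ENNReal.div_lt_top hN1t hq0).ne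
  rw [← ENNReal.toReal_le_toReal hLHSfin hRHSfin, ENNReal.toReal_div]
  have hRHS_toReal : (((2:ℝ≥0∞)^e1 * V / eLpNorm g q volume ^ 2)^e2).toReal =
      ((2:ℝ)^e1 * V.toReal / Nq^2)^e2 := by
    rw [← ENNReal.toReal_rpow, ENNReal.toReal_div, ENNReal.toReal_mul, ENNReal.toReal_pow,
      ← ENNReal.toReal_rpow, ← hNqdef]
    norm_num
  rw [hRHS_toReal, div_le_iff₀ hNq, ← hkey]
  exact hreal
end
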